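/- Let ω₀ > 0, m_r > 0, k > 0, and b ≥ 0 be reals, and let A be the real 4×4 matrix with rows (0, 1, 0, 0), (−3ω₀², 0, 0, 2ω₀), (0, 0, 0, 1), (0, −2ω₀, 3ω₀² − k/m_r, −b/m_r). Then every complex eigenvalue ρ of A satisfies Re ρ < 0 if and only if b > 0 and k > 3ω₀²·m_r. -/

import Mathlib

open Matrix Polynomial

private lemma quartic_stable_iff (w a u : ℝ) (hw : 0 < w) (ha : 0 ≤ a) (hu : 0 < u) :
    (∀ ρ : ℂ, ρ^4 + ((a:ℝ):ℂ)*ρ^3 + (((u:ℝ):ℂ) + 4*(w:ℂ)^2)*ρ^2 + (3*(w:ℂ)^2*((a:ℝ):ℂ))*ρ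
      + (3*(w:ℂ)^2*((u:ℝ):ℂ) - 9*(w:ℂ)^4) = 0 → ρ.re < 0)
    ↔ (0 < a ∧ 3*w^2 < u) := by
  constructor
  · intro H
    have hu3 : 3*w^2 < u := by
      by_contra hle
      push_neg at hle
      set q : ℝ → ℝ := fun t => t^4 + a*t^3 + (u+4*w^2)*t^2 + 3*w^2*a*t + (3*w^2*u - 9*w^4)
        with hq
      have hcont : ContinuousOn q (Set.Icc 0 (1 + 9*w^4)) := by
        apply Continuous.continuousOn; unfold q; continuity
      have hT : (0:ℝ) ≤ 1 + 9*w^4 := by positivity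
      have hq0 : q 0 ≤ 0 := by
        simp only [hq]; nlinarith [sq_nonneg w, mul_pos hw hw]
      have hqT : 0 < q (1 + 9*w^4) := by
        simp only [hq]
        have h1 : (1:ℝ) ≤ 1 + 9*w^4 := by nlinarith [pow_nonneg hw.le 4]
        have h2 : (1 + 9*w^4) ≤ (1+9*w^4)^4 := le_self_pow₀ h1 (by norm_num)
        have h3 : 0 ≤ a * (1+9*w^4)^3 := mul_nonneg ha (by positivity)
        have h4 : 0 ≤ (u + 4*w^2) * (1+9*w^4)^2 := mul_nonneg (by positivity) (by positivity)
        have h5 : 0 ≤ 3*w^2*a*(1+9*w^4) := mul_nonneg (mul_nonneg (by positivity) ha) (by positivity)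
        have h6 : 0 < 3*w^2*u := by positivity
        linarith
      have hmem : (0:ℝ) ∈ Set.Icc (q 0) (q (1 + 9*w^4)) := ⟨hq0, hqT.le⟩
      obtain ⟨t, ⟨ht0, _⟩, hqt⟩ := intermediate_value_Icc hT hcont hmem
      have := H t (by
        have h0 : ((q t : ℝ) : ℂ) = 0 := by rw [hqt]; norm_num
        rw [← h0]; simp only [hq]; push_cast; ring)
      simp only [Complex.ofReal_re] at this
      linarith
    refine ⟨?_, hu3⟩
    rcases ha.lt_or_eq with h | h
    · exact h
    · exfalso
      set p : ℂ[X] := X^4 + C ((u:ℂ)+4*(w:ℂ)^2) * X^2 + C (3*(w:ℂ)^2*(u:ℂ) - 9*(w:ℂ)^4)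
        with hp
      have hdeg : p.degree = 4 := by
        unfold p
        compute_degree!
      obtain ⟨z, hz⟩ := Complex.exists_root (by rw [hdeg]; norm_num : 0 < p.degree)
      have hz' : z^4 + ((u:ℂ) + 4*(w:ℂ)^2)*z^2 + (3*(w:ℂ)^2*(u:ℂ) - 9*(w:ℂ)^4) = 0 := by
        have := hz
        simp only [Polynomial.IsRoot, hp, eval_add, eval_mul, eval_pow, eval_X, eval_C] at this
        linear_combination this
      have hroot : ∀ ζ : ℂ, ζ^4 + ((u:ℂ) + 4*(w:ℂ)^2)*ζ^2 + (3*(w:ℂ)^2*(u:ℂ) - 9*(w:ℂ)^4) = 0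
          → ζ.re < 0 := by
        intro ζ hζ
        apply H
        rw [← h]
        push_cast
        linear_combination hζ
      have h1 := hroot z hz'
      have h2 := hroot (-z) (by linear_combination hz')
      simp only [Complex.neg_re] at h2
      linarith
  · rintro ⟨ha', hu3⟩ ρ hρ
    by_contra hx
    push_neg at hx
    set x := ρ.re with hxdef
    set y := ρ.im with hydef
    have hρ' : ρ = (x:ℂ) + (y:ℂ)*Complex.I := (Complex.re_add_im ρ).symm
    rw [hρ'] at hρ
    have key : ((x:ℂ) + (y:ℂ)*Complex.I)^4 + ((a:ℝ):ℂ)*((x:ℂ) + (y:ℂ)*Complex.I)^3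
        + (((u:ℝ):ℂ) + 4*(w:ℂ)^2)*((x:ℂ) + (y:ℂ)*Complex.I)^2
        + (3*(w:ℂ)^2*((a:ℝ):ℂ))*((x:ℂ) + (y:ℂ)*Complex.I) + (3*(w:ℂ)^2*((u:ℝ):ℂ) - 9*(w:ℂ)^4)
        = ((x^4 - 6*x^2*y^2 + y^4 + a*(x^3-3*x*y^2) + (u+4*w^2)*(x^2-y^2) + 3*w^2*a*x
            + 3*w^2*u - 9*w^4 : ℝ) : ℂ)
          + ((4*x^3*y - 4*x*y^3 + a*(3*x^2*y - y^3) + 2*(u+4*w^2)*x*y + 3*w^2*a*y : ℝ) : ℂ)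
            * Complex.I := by
      push_cast
      ring_nf
      simp only [Complex.I_sq, show (Complex.I:ℂ)^3 = -Complex.I from by
        rw [pow_succ, Complex.I_sq]; ring, show (Complex.I:ℂ)^4 = 1 from by
        rw [pow_succ, show (Complex.I:ℂ)^3 = -Complex.I from by rw [pow_succ, Complex.I_sq]; ring]
        simp [Complex.I_mul_I]]
      ring
    rw [key] at hρ
    rw [Complex.ext_iff] at hρ
    simp only [Complex.add_re, Complex.add_im, Complex.ofReal_re, Complex.ofReal_im,
      Complex.mul_re, Complex.mul_im, Complex.I_re, Complex.I_im, Complex.zero_re,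
      Complex.zero_im, mul_zero, mul_one, zero_sub, add_zero, zero_add, neg_eq_zero] at hρ
    obtain ⟨h1, h2⟩ := hρ
    rcases eq_or_ne y 0 with hy | hy
    · rw [hy] at h1
      nlinarith [pow_nonneg hx 4, pow_nonneg hx 3, pow_nonneg hx 2, mul_pos hw hw,
        mul_nonneg (mul_nonneg ha'.le (pow_nonneg hx 3)) (le_of_lt hw),
        mul_nonneg ha'.le hx, sq_nonneg w, hx, ha', hu3,
        mul_pos (mul_pos hw hw) (mul_pos hw hw)]
    · have h3 : y^2*(4*x+a) = 4*x^3+3*a*x^2+2*(u+4*w^2)*x+3*w^2*a := by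
        have h2' : y * (4*x^3 - 4*x*y^2 + 3*a*x^2 - a*y^2 + 2*(u+4*w^2)*x + 3*w^2*a) = 0 := by
          linear_combination h2
        rcases mul_eq_zero.mp h2' with h | h
        · exact absurd h hy
        · linear_combination -h
      have hF : (x^4+a*x^3+(u+4*w^2)*x^2+3*w^2*a*x+3*w^2*u-9*w^4)*(4*x+a)^2
          - (6*x^2+3*a*x+(u+4*w^2))*(4*x^3+3*a*x^2+2*(u+4*w^2)*x+3*w^2*a)*(4*x+a)
          + (4*x^3+3*a*x^2+2*(u+4*w^2)*x+3*w^2*a)^2 = 0 := by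
        linear_combination (4*x+a)^2 * h1 - (y^2*(4*x+a)
          + (4*x^3+3*a*x^2+2*(u+4*w^2)*x+3*w^2*a) - (6*x^2+3*a*x+(u+4*w^2))*(4*x+a)) * h3
      have hsum : 12*a^2*w^4 + 2*(a*x*(u-2*w^2)^2) + 96*(a*x*w^4) + 6*(a^3*x*w^2)
          + 4*(x^2*(u-2*w^2)^2) + 192*(x^2*w^4) + 44*(a^2*x^2*w^2) + 8*(a^2*x^2*u)
          + 128*(a*x^3*w^2) + 32*(a*x^3*u) + 8*(a^3*x^3) + 128*(x^4*w^2) + 32*(x^4*u)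
          + 48*(a^2*x^4) + 96*(a*x^5) + 64*x^6 = 0 := by
        linear_combination -hF
      have hu0 : 0 < u := lt_trans (by positivity) hu3
      have n1 : 0 < 12*a^2*w^4 := by positivity
      have n2 : 0 ≤ a*x*(u-2*w^2)^2 := mul_nonneg (mul_nonneg ha'.le hx) (sq_nonneg _)
      have n3 : 0 ≤ a*x*w^4 := mul_nonneg (mul_nonneg ha'.le hx) (by positivity)
      have n4 : 0 ≤ a^3*x*w^2 := mul_nonneg (mul_nonneg (by positivity) hx) (sq_nonneg w)
      have n5 : 0 ≤ x^2*(u-2*w^2)^2 := mul_nonneg (by positivity) (sq_nonneg _)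
      have n6 : 0 ≤ x^2*w^4 := by positivity
      have n7 : 0 ≤ a^2*x^2*w^2 := by positivity
      have n8 : 0 ≤ a^2*x^2*u := by positivity
      have n9 : 0 ≤ a*x^3*w^2 := mul_nonneg (mul_nonneg ha'.le (pow_nonneg hx 3)) (sq_nonneg w)
      have n10 : 0 ≤ a*x^3*u := mul_nonneg (mul_nonneg ha'.le (pow_nonneg hx 3)) hu0.le
      have n11 : 0 ≤ a^3*x^3 := mul_nonneg (by positivity) (pow_nonneg hx 3)
      have n12 : 0 ≤ x^4*w^2 := by positivity
      have n13 : 0 ≤ x^4*u := by positivity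
      have n14 : 0 ≤ a^2*x^4 := by positivity
      have n15 : 0 ≤ a*x^5 := mul_nonneg ha'.le (pow_nonneg hx 5)
      have n16 : 0 ≤ x^6 := by positivity
      linarith

/-- Routh–Hurwitz analysis of the linearized in-plane dynamics of the relative
motion between the main satellite and the deputy satellites' center of mass:
all complex eigenvalues (roots of the characteristic polynomial) of the matrix
`A` lie in the open left half-plane iff `b > 0` and `k > 3ω₀²·m_r`. -/
theorem com_relative_motion_stability (ω₀ mr k b : ℝ)
    (hω₀ : 0 < ω₀) (hmr : 0 < mr) (hk : 0 < k) (hb : 0 ≤ b) :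
    (∀ ρ : ℂ,
        (Polynomial.aeval ρ)
          (Matrix.charpoly
            (!![0, 1, 0, 0;
                -3 * ω₀ ^ 2, 0, 0, 2 * ω₀;
                0, 0, 0, 1;
                0, -2 * ω₀, 3 * ω₀ ^ 2 - k / mr, -b / mr] :
              Matrix (Fin 4) (Fin 4) ℝ)) = 0 → ρ.re < 0) ↔
    (0 < b ∧ 3 * ω₀ ^ 2 * mr < k) := by
  have hchar : ∀ ρ : ℂ,
      (Polynomial.aeval ρ)
        (Matrix.charpoly
          (!![0, 1, 0, 0;
              -3 * ω₀ ^ 2, 0, 0, 2 * ω₀;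
              0, 0, 0, 1;
              0, -2 * ω₀, 3 * ω₀ ^ 2 - k / mr, -b / mr] :
            Matrix (Fin 4) (Fin 4) ℝ))
      = ρ^4 + ((b/mr : ℝ):ℂ)*ρ^3 + (((k/mr : ℝ):ℂ) + 4*(ω₀:ℂ)^2)*ρ^2
        + (3*(ω₀:ℂ)^2*((b/mr : ℝ):ℂ))*ρ + (3*(ω₀:ℂ)^2*((k/mr : ℝ):ℂ) - 9*(ω₀:ℂ)^4) := by
    intro ρ
    rw [Matrix.charpoly, AlgHom.map_det (aeval ρ)]
    simp [Matrix.det_succ_row_zero, Fin.sum_univ_succ, Matrix.charmatrix_apply,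
      Matrix.map_apply, Matrix.diagonal_apply, show (Fin.succAbove 1 2 : Fin 4) = 3 from rfl]
    push_cast
    ring
  simp only [hchar]
  rw [quartic_stable_iff ω₀ (b/mr) (k/mr) hω₀ (by positivity) (by positivity)]
  constructor
  · rintro ⟨h1, h2⟩
    refine ⟨?_, by rwa [lt_div_iff₀ hmr] at h2⟩
    have := mul_pos h1 hmr
    rwa [div_mul_cancel₀ _ hmr.ne'] at this
  · rintro ⟨h1, h2⟩
    exact ⟨div_pos h1 hmr, by rwa [lt_div_iff₀ hmr]⟩
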